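/- Let M, N be positive natural numbers and let d be a dataset of N instances with M binary protected attributes and a binary label. Suppose every vertex (level-0 hypercube) contains at least one instance, i.e. N(v) > 0 for every v : Fin M → Bool. Then the maximum success rate per level, SR_max(K) = max over all hypercubes x of level K of SR(x), is a monotonically decreasing function of K: for every K with 1 ≤ K ≤ M, SR_max(K) ≤ SR_max(K-1). -/

import Mathlib

/-- An attribute vector `v` belongs to the hypercube `x` if it matches all specified coordinates. -/
def Belongs {M : ℕ} (x : Fin M → Option Bool) (v : Fin M → Bool) : Prop :=
  ∀ i : Fin M, ∀ b : Bool, x i = some b → v i = b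

instance {M : ℕ} (x : Fin M → Option Bool) (v : Fin M → Bool) : Decidable (Belongs x v) := by
  unfold Belongs; infer_instance

/-- The level of a hypercube: the number of its stars (unspecified coordinates). -/
def level {M : ℕ} (x : Fin M → Option Bool) : ℕ :=
  (Finset.univ.filter fun i => x i = none).card

/-- `cnt d x` = N(x): the number of instances of the dataset `d` belonging to `x`. -/
def cnt {M N : ℕ} (d : Fin N → (Fin M → Bool) × Bool) (x : Fin M → Option Bool) : ℕ :=
  (Finset.univ.filter fun n => Belongs x (d n).1).card

/-- `cnt1 d x` = N¹(x): the number of instances belonging to `x` with label `true`. -/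
def cnt1 {M N : ℕ} (d : Fin N → (Fin M → Bool) × Bool) (x : Fin M → Option Bool) : ℕ :=
  (Finset.univ.filter fun n => Belongs x (d n).1 ∧ (d n).2 = true).card

/-- The success rate SR(x) = N¹(x)/N(x). -/
def SR {M N : ℕ} (d : Fin N → (Fin M → Bool) × Bool) (x : Fin M → Option Bool) : ℚ :=
  (cnt1 d x : ℚ) / (cnt d x : ℚ)

/-- The finset of all hypercubes of level `K`. -/
def levelSet (M K : ℕ) : Finset (Fin M → Option Bool) :=
  Finset.univ.filter fun x => level x = K

/-- SR_min(K): minimum success rate over all hypercubes of level `K`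
(the level set is nonempty whenever `K ≤ M`, so the junk value `0` is never used there). -/
def SRmin {M N : ℕ} (d : Fin N → (Fin M → Bool) × Bool) (K : ℕ) : ℚ :=
  WithTop.untopD 0 (((levelSet M K).image (SR d)).min)

/-- SR_max(K): maximum success rate over all hypercubes of level `K`. -/
def SRmax {M N : ℕ} (d : Fin N → (Fin M → Bool) × Bool) (K : ℕ) : ℚ :=
  WithBot.unbotD 0 (((levelSet M K).image (SR d)).max)

lemma mediant_le_max (a c : ℕ) {b e : ℕ} (hb : 0 < b) (he : 0 < e) :
    ((a : ℚ) + c) / ((b : ℚ) + e) ≤ max ((a:ℚ)/b) ((c:ℚ)/e) := by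
  have hb' : (0:ℚ) < b := by exact_mod_cast hb
  have he' : (0:ℚ) < e := by exact_mod_cast he
  rcases le_total ((a:ℚ)/b) ((c:ℚ)/e) with h | h
  · refine le_max_of_le_right ?_
    rw [div_le_div_iff₀ hb' he'] at h
    rw [div_le_div_iff₀ (by positivity) he']
    nlinarith
  · refine le_max_of_le_left ?_
    rw [div_le_div_iff₀ he' hb'] at h
    rw [div_le_div_iff₀ (by positivity) hb']
    nlinarith

lemma cnt_pos' {M N : ℕ} (d : Fin N → (Fin M → Bool) × Bool)
    (hvert : ∀ v : Fin M → Bool, 0 < cnt d (fun i => some (v i)))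
    (x : Fin M → Option Bool) : 0 < cnt d x := by
  classical
  set v : Fin M → Bool := fun i => (x i).getD false with hv
  refine lt_of_lt_of_le (hvert v) ?_
  unfold cnt
  apply Finset.card_le_card
  apply Finset.monotone_filter_right
  intro n _ h i b hx
  have := h i (v i) rfl
  rw [this, hv]
  simp [hx]

lemma belongs_update_iff {M : ℕ} (x : Fin M → Option Bool) (i : Fin M)
    (hi : x i = none) (b : Bool) (v : Fin M → Bool) :
    Belongs (Function.update x i (some b)) v ↔ Belongs x v ∧ v i = b := by
  constructor
  · intro h
    refine ⟨fun j c hj => ?_, h i b (by simp)⟩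
    have hji : j ≠ i := by rintro rfl; rw [hi] at hj; cases hj
    exact h j c (by simpa [Function.update, hji] using hj)
  · rintro ⟨h, hv⟩ j c hj
    by_cases hji : j = i
    · subst hji; simp at hj; subst hj; exact hv
    · exact h j c (by simpa [Function.update, hji] using hj)

lemma cnt_split {M N : ℕ} (d : Fin N → (Fin M → Bool) × Bool)
    (x : Fin M → Option Bool) (i : Fin M) (hi : x i = none) :
    cnt d x = cnt d (Function.update x i (some true)) + cnt d (Function.update x i (some false)) := by
  classical
  unfold cnt
  have h1 : (Finset.univ.filter fun n => Belongs (Function.update x i (some true)) (d n).1)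
      = (Finset.univ.filter fun n => Belongs x (d n).1 ∧ (d n).1 i = true) := by
    apply Finset.filter_congr; intro n _; simp [belongs_update_iff x i hi]
  have h0 : (Finset.univ.filter fun n => Belongs (Function.update x i (some false)) (d n).1)
      = (Finset.univ.filter fun n => Belongs x (d n).1 ∧ ¬((d n).1 i = true)) := by
    apply Finset.filter_congr; intro n _; simp [belongs_update_iff x i hi]
  rw [h1, h0, ← Finset.filter_filter, ← Finset.filter_filter,
    Finset.card_filter_add_card_filter_not]

lemma cnt1_split {M N : ℕ} (d : Fin N → (Fin M → Bool) × Bool)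
    (x : Fin M → Option Bool) (i : Fin M) (hi : x i = none) :
    cnt1 d x = cnt1 d (Function.update x i (some true)) + cnt1 d (Function.update x i (some false)) := by
  classical
  unfold cnt1
  have h1 : (Finset.univ.filter fun n => Belongs (Function.update x i (some true)) (d n).1 ∧ (d n).2 = true)
      = (Finset.univ.filter fun n => (Belongs x (d n).1 ∧ (d n).2 = true) ∧ (d n).1 i = true) := by
    apply Finset.filter_congr; intro n _; simp [belongs_update_iff x i hi]; tauto
  have h0 : (Finset.univ.filter fun n => Belongs (Function.update x i (some false)) (d n).1 ∧ (d n).2 = true)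
      = (Finset.univ.filter fun n => (Belongs x (d n).1 ∧ (d n).2 = true) ∧ ¬((d n).1 i = true)) := by
    apply Finset.filter_congr; intro n _; simp [belongs_update_iff x i hi]; tauto
  rw [h1, h0]
  have key := Finset.card_filter_add_card_filter_not
    (s := Finset.univ.filter fun n => Belongs x (d n).1 ∧ (d n).2 = true)
    (p := fun n => (d n).1 i = true)
  rw [Finset.filter_filter, Finset.filter_filter] at key
  omega

lemma level_update {M : ℕ} (x : Fin M → Option Bool) (i : Fin M) (hi : x i = none) (b : Bool) :
    level (Function.update x i (some b)) = level x - 1 := by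
  classical
  unfold level
  have h : (Finset.univ.filter fun j => Function.update x i (some b) j = none)
      = (Finset.univ.filter fun j => x j = none).erase i := by
    ext j
    by_cases hji : j = i <;> simp [Function.update, hji, hi]
  rw [h, Finset.card_erase_of_mem (by simp [hi])]

lemma levelSet_nonempty (M K : ℕ) (h : K ≤ M) : (levelSet M K).Nonempty := by
  classical
  refine ⟨fun j => if (j : ℕ) < K then none else some false, ?_⟩
  simp only [levelSet, Finset.mem_filter, Finset.mem_univ, true_and]
  simp only [level]
  have h1 : (Finset.univ.filter fun j : Fin M =>
      (if (j : ℕ) < K then (none : Option Bool) else some false) = none)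
      = Finset.univ.filter fun j : Fin M => (j : ℕ) < K := by
    apply Finset.filter_congr; intro j _
    by_cases hj : (j : ℕ) < K <;> simp [hj]
  rw [h1]
  have h2 : (Finset.univ.filter fun j : Fin M => (j : ℕ) < K)
      = (Finset.univ : Finset (Fin K)).map (Fin.castLEEmb h) := by
    ext j
    simp [Fin.castLEEmb]
    constructor
    · intro hj; exact ⟨⟨j, hj⟩, rfl⟩
    · rintro ⟨k, rfl⟩; exact k.2
  rw [h2]; simp

/-- If every vertex contains at least one instance, the maximum success
rate per level is monotonically decreasing in the level. -/
theorem SRmax_anti (M N : ℕ) (hM : 0 < M) (hN : 0 < N)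
    (d : Fin N → (Fin M → Bool) × Bool)
    (hvert : ∀ v : Fin M → Bool, 0 < cnt d (fun i => some (v i)))
    (K : ℕ) (hK1 : 1 ≤ K) (hKM : K ≤ M) :
    SRmax d K ≤ SRmax d (K - 1) := by
  classical
  have hneK : ((levelSet M K).image (SR d)).Nonempty :=
    (levelSet_nonempty M K hKM).image _
  have hneK1 : ((levelSet M (K-1)).image (SR d)).Nonempty :=
    (levelSet_nonempty M (K-1) (le_trans (Nat.sub_le _ _) hKM)).image _
  have hmaxK : SRmax d K = ((levelSet M K).image (SR d)).max' hneK := by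
    rw [SRmax, ← Finset.coe_max' hneK, WithBot.unbotD_coe]
  have hmaxK1 : SRmax d (K-1) = ((levelSet M (K-1)).image (SR d)).max' hneK1 := by
    rw [SRmax, ← Finset.coe_max' hneK1, WithBot.unbotD_coe]
  obtain ⟨x, hx, hSRx⟩ := Finset.mem_image.mp (Finset.max'_mem _ hneK)
  rw [hmaxK, ← hSRx, hmaxK1]
  have hlev : level x = K := (Finset.mem_filter.mp hx).2
  have hfne : (Finset.univ.filter fun i => x i = none).Nonempty := by
    rw [← Finset.card_pos]
    have : (Finset.univ.filter fun i => x i = none).card = K := hlev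
    omega
  obtain ⟨i, hi'⟩ := hfne
  have hi : x i = none := (Finset.mem_filter.mp hi').2
  have hmem : ∀ b : Bool, Function.update x i (some b) ∈ levelSet M (K-1) := by
    intro b
    simp [levelSet, level_update x i hi b, hlev]
  have key : SR d x ≤ max (SR d (Function.update x i (some true)))
      (SR d (Function.update x i (some false))) := by
    rw [SR, cnt_split d x i hi, cnt1_split d x i hi]
    push_cast
    exact mediant_le_max _ _ (cnt_pos' d hvert _) (cnt_pos' d hvert _)
  refine le_trans key (max_le ?_ ?_) <;>
    exact Finset.le_max' _ _ (Finset.mem_image_of_mem _ (hmem _))
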